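/- Let H be an n×n complex Hermitian matrix (Hᴴ = H). Then for every n×n complex matrix x, trace(H · ⁅x, ⁅xᴴ, H⁆⁆) = ‖⁅x, H⁆‖², where ‖·‖ is the Frobenius norm. (Equivalently: the differential of the height function f_H(x) = trace(xH) evaluated on the transversal vector field equals ‖⁅x,H⁆‖², so that df_H(Z(x)) = 1 where Z(x) = ‖⁅x,H⁆‖⁻²·⁅x,⁅xᴴ,H⁆⁆.) -/

import Mathlib

open Matrix

attribute [local instance] Matrix.frobeniusNormedAddCommGroup

lemma sq_norm_eq_trace (n : ℕ) (A : Matrix (Fin n) (Fin n) ℂ) :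
    (‖A‖ ^ 2 : ℂ) = Matrix.trace (A * Aᴴ) := by
  have hr : ‖A‖ ^ 2 = ∑ i, ∑ j, ‖A i j‖ ^ 2 := by
    rw [Matrix.frobenius_norm_def, ← Real.rpow_natCast _ 2,
      ← Real.rpow_mul (by positivity)]
    norm_num
  rw [Matrix.trace]
  simp only [Matrix.diag_apply, Matrix.mul_apply, Matrix.conjTranspose_apply,
    Complex.star_def, Complex.mul_conj']
  rw [← Complex.ofReal_pow, hr]
  push_cast
  rfl

theorem trace_H_mul_bracket_eq_sq_norm_bracket
    (n : ℕ) (H : Matrix (Fin n) (Fin n) ℂ) (hH : H.IsHermitian) :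
    ∀ x : Matrix (Fin n) (Fin n) ℂ,
      Matrix.trace (H * ⁅x, ⁅xᴴ, H⁆⁆) = (‖⁅x, H⁆‖ ^ 2 : ℂ) := by
  intro x
  rw [sq_norm_eq_trace]
  have key : ∀ B : Matrix (Fin n) (Fin n) ℂ,
      Matrix.trace (H * ⁅x, B⁆) = Matrix.trace (⁅H, x⁆ * B) := by
    intro B
    simp only [Ring.lie_def, Matrix.mul_sub, Matrix.sub_mul, Matrix.trace_sub,
      ← mul_assoc]
    rw [Matrix.trace_mul_comm (H * B) x, ← mul_assoc]
  rw [key]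
  have h1 : ⁅H, x⁆ = -⁅x, H⁆ := by rw [Ring.lie_def, Ring.lie_def, neg_sub]
  have h2 : ⁅xᴴ, H⁆ = -⁅x, H⁆ᴴ := by
    simp [Ring.lie_def, Matrix.conjTranspose_mul, hH.eq]
  rw [h1, h2, Matrix.neg_mul, Matrix.mul_neg, neg_neg]
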